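/- Let $k$ be a field, $S = k[x,y,z,w]$, and for $n_1, n_2 \ge 2$ let $I = (x,y)^{n_1} + (z,w)^{n_2} + (xz-yw)$. Then the set $\mathcal{B} = \{ x^{u_1}y^{u_2}z^{u_3}w^{u_4} + I : u_1+u_2 < n_1,\ u_3+u_4 < n_2,\ u_2 u_4 = 0 \}$ is a $k$-vector space basis of $S/I$. -/

import Mathlib

open MvPolynomial

open Pointwise

namespace Stmt8Aux

variable {k : Type*} [Field k]

abbrev Idx (n1 n2 : ℕ) := {u : ℕ × ℕ × ℕ × ℕ //
    u.1 + u.2.1 < n1 ∧ u.2.2.1 + u.2.2.2 < n2 ∧ u.2.1 * u.2.2.2 = 0}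

noncomputable def e (u : ℕ × ℕ × ℕ × ℕ) : Fin 4 →₀ ℕ :=
  Finsupp.single 0 u.1 + Finsupp.single 1 u.2.1 + Finsupp.single 2 u.2.2.1 +
    Finsupp.single 3 u.2.2.2

lemma e_apply (u : ℕ × ℕ × ℕ × ℕ) :
    e u 0 = u.1 ∧ e u 1 = u.2.1 ∧ e u 2 = u.2.2.1 ∧ e u 3 = u.2.2.2 := by
  simp [e, Finsupp.single_apply]

def red (v : Fin 4 →₀ ℕ) : ℕ × ℕ × ℕ × ℕ :=
  (v 0 + min (v 1) (v 3), v 1 - min (v 1) (v 3), v 2 + min (v 1) (v 3),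
    v 3 - min (v 1) (v 3))

lemma red_mem {n1 n2 : ℕ} {v : Fin 4 →₀ ℕ} (h : v 0 + v 1 < n1 ∧ v 2 + v 3 < n2) :
    (red v).1 + (red v).2.1 < n1 ∧ (red v).2.2.1 + (red v).2.2.2 < n2 ∧
      (red v).2.1 * (red v).2.2.2 = 0 := by
  obtain ⟨h1, h2⟩ := h
  refine ⟨by simp [red]; omega, by simp [red]; omega, ?_⟩
  rcases le_total (v 1) (v 3) with h | h
  · simp [red, Nat.min_eq_left h]
  · simp [red, Nat.min_eq_right h]

noncomputable def tgt (n1 n2 : ℕ) (v : Fin 4 →₀ ℕ) : Idx n1 n2 →₀ k :=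
  if h : v 0 + v 1 < n1 ∧ v 2 + v 3 < n2 then
    Finsupp.single ⟨red v, red_mem h⟩ 1 else 0

noncomputable def L (n1 n2 : ℕ) : MvPolynomial (Fin 4) k →ₗ[k] (Idx n1 n2 →₀ k) :=
  (MvPolynomial.basisMonomials (Fin 4) k).constr k (tgt n1 n2)

lemma L_monomial (n1 n2 : ℕ) (v : Fin 4 →₀ ℕ) (r : k) :
    L n1 n2 (monomial v r) = r • tgt n1 n2 v := by
  have h : (monomial v (r : k)) = r • monomial v 1 := by
    rw [MvPolynomial.smul_monomial, smul_eq_mul, mul_one]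
  rw [h, map_smul]
  congr 1
  have hb := MvPolynomial.coe_basisMonomials (Fin 4) k
  rw [L, ← congrFun hb v, Module.Basis.constr_basis]


lemma mem_pair_pow {A B : MvPolynomial (Fin 4) k} {g : MvPolynomial (Fin 4) k} {n : ℕ}
    (hg : g ∈ ({A, B} : Set (MvPolynomial (Fin 4) k)) ^ n) :
    ∃ i j, i + j = n ∧ g = A ^ i * B ^ j := by
  induction n generalizing g with
  | zero =>
    simp only [pow_zero, Set.mem_one] at hg
    exact ⟨0, 0, rfl, by simp [hg]⟩
  | succ n ih =>
    rw [pow_succ] at hg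
    obtain ⟨a, ha, b, hb, rfl⟩ := Set.mem_mul.1 hg
    obtain ⟨i, j, hij, rfl⟩ := ih ha
    rcases hb with rfl | rfl
    · exact ⟨i + 1, j, by omega, by ring⟩
    · exact ⟨i, j + 1, by omega, by ring⟩

lemma monomial_XX (v : Fin 4 →₀ ℕ) (r : k) (a b : Fin 4) (i j : ℕ) :
    monomial v r * (X a ^ i * X b ^ j) =
      monomial (v + Finsupp.single a i + Finsupp.single b j) r := by
  rw [X_pow_eq_monomial, X_pow_eq_monomial, monomial_mul, monomial_mul]
  simp [add_assoc]


lemma tgt_zero_left {n1 n2 : ℕ} {v : Fin 4 →₀ ℕ} (h : n1 ≤ v 0 + v 1) :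
    tgt n1 n2 v = (0 : Idx n1 n2 →₀ k) := by
  rw [tgt, dif_neg]; omega

lemma tgt_zero_right {n1 n2 : ℕ} {v : Fin 4 →₀ ℕ} (h : n2 ≤ v 2 + v 3) :
    tgt n1 n2 v = (0 : Idx n1 n2 →₀ k) := by
  rw [tgt, dif_neg]; omega

lemma add_single_apply (v : Fin 4 →₀ ℕ) (a b : Fin 4) (i j : ℕ) (c : Fin 4) :
    (v + Finsupp.single a i + Finsupp.single b j) c
      = v c + (if a = c then i else 0) + (if b = c then j else 0) := by
  simp [Finsupp.single_apply]

lemma L_rel (n1 n2 : ℕ) (a : MvPolynomial (Fin 4) k) :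
    L n1 n2 (a * (X 0 * X 2 - X 1 * X 3)) = 0 := by
  induction a using MvPolynomial.induction_on' with
  | add p q hp hq => rw [add_mul, map_add, hp, hq, add_zero]
  | monomial v r =>
    have h02 : monomial v r * (X (R := k) 0 * X 2)
        = monomial (v + Finsupp.single 0 1 + Finsupp.single 2 1) r := by
      have := monomial_XX (k := k) v r 0 2 1 1; simpa using this
    have h13 : monomial v r * (X (R := k) 1 * X 3)
        = monomial (v + Finsupp.single 1 1 + Finsupp.single 3 1) r := by
      have := monomial_XX (k := k) v r 1 3 1 1; simpa using this
    rw [mul_sub, h02, h13, map_sub, L_monomial, L_monomial]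
    set v1 := v + Finsupp.single 0 1 + Finsupp.single 2 1 with hv1
    set v2 := v + Finsupp.single 1 1 + Finsupp.single 3 1 with hv2
    have e10 : v1 0 = v 0 + 1 := by rw [hv1, add_single_apply]; simp
    have e11 : v1 1 = v 1 := by rw [hv1, add_single_apply]; simp
    have e12 : v1 2 = v 2 + 1 := by rw [hv1, add_single_apply]; simp
    have e13 : v1 3 = v 3 := by rw [hv1, add_single_apply]; simp
    have e20 : v2 0 = v 0 := by rw [hv2, add_single_apply]; simp
    have e21 : v2 1 = v 1 + 1 := by rw [hv2, add_single_apply]; simp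
    have e22 : v2 2 = v 2 := by rw [hv2, add_single_apply]; simp
    have e23 : v2 3 = v 3 + 1 := by rw [hv2, add_single_apply]; simp
    have key : tgt n1 n2 v1 = (tgt n1 n2 v2 : Idx n1 n2 →₀ k) := by
      rw [tgt, tgt]
      by_cases h : v 0 + v 1 + 1 < n1 ∧ v 2 + v 3 + 1 < n2
      · rw [dif_pos (by rw [e10, e11, e12, e13]; omega),
          dif_pos (by rw [e20, e21, e22, e23]; omega)]
        congr 1
        apply Subtype.ext
        simp only [red, e10, e11, e12, e13, e20, e21, e22, e23, Prod.mk.injEq]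
        omega
      · rw [dif_neg (by rw [e10, e11, e12, e13]; omega),
          dif_neg (by rw [e20, e21, e22, e23]; omega)]
    rw [key, sub_self]


lemma L_pow_left (n1 n2 : ℕ) (a : MvPolynomial (Fin 4) k) {g : MvPolynomial (Fin 4) k}
    (hg : g ∈ ({X 0, X 1} : Set (MvPolynomial (Fin 4) k)) ^ n1) :
    L n1 n2 (a * g) = 0 := by
  obtain ⟨i, j, hij, rfl⟩ := mem_pair_pow hg
  induction a using MvPolynomial.induction_on' with
  | add p q hp hq => rw [add_mul, map_add, hp, hq, add_zero]
  | monomial v r =>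
    rw [monomial_XX, L_monomial, tgt_zero_left, smul_zero]
    rw [add_single_apply, add_single_apply]
    simp; omega

lemma L_pow_right (n1 n2 : ℕ) (a : MvPolynomial (Fin 4) k) {g : MvPolynomial (Fin 4) k}
    (hg : g ∈ ({X 2, X 3} : Set (MvPolynomial (Fin 4) k)) ^ n2) :
    L n1 n2 (a * g) = 0 := by
  obtain ⟨i, j, hij, rfl⟩ := mem_pair_pow hg
  induction a using MvPolynomial.induction_on' with
  | add p q hp hq => rw [add_mul, map_add, hp, hq, add_zero]
  | monomial v r =>
    rw [monomial_XX, L_monomial, tgt_zero_right, smul_zero]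
    rw [add_single_apply, add_single_apply]
    simp; omega

lemma L_ideal (n1 n2 : ℕ) {p : MvPolynomial (Fin 4) k}
    (hp : p ∈ (Ideal.span {X 0, X 1}) ^ n1 + (Ideal.span {X 2, X 3}) ^ n2
        + Ideal.span {(X 0 : MvPolynomial (Fin 4) k) * X 2 - X 1 * X 3}) :
    L n1 n2 p = 0 := by
  rw [← Ideal.submodule_span_eq, ← Ideal.submodule_span_eq, ← Ideal.submodule_span_eq,
    Submodule.span_pow, Submodule.span_pow, Submodule.add_eq_sup, Submodule.add_eq_sup,
    ← Submodule.span_union, ← Submodule.span_union, Ideal.submodule_span_eq] at hp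
  set G := (({X 0, X 1} : Set (MvPolynomial (Fin 4) k)) ^ n1 ∪
      ({X 2, X 3} : Set (MvPolynomial (Fin 4) k)) ^ n2) ∪
      {(X 0 : MvPolynomial (Fin 4) k) * X 2 - X 1 * X 3} with hG
  have key : ∀ q ∈ Ideal.span G, ∀ a : MvPolynomial (Fin 4) k, L n1 n2 (a * q) = 0 := by
    intro q hq
    induction hq using Submodule.span_induction with
    | mem g hg =>
      intro a
      rcases hg with (hg | hg) | hg
      · exact L_pow_left n1 n2 a hg
      · exact L_pow_right n1 n2 a hg
      · rw [Set.mem_singleton_iff] at hg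
        rw [hg]; exact L_rel n1 n2 a
    | zero => intro a; rw [mul_zero, map_zero]
    | add x y hx hy ihx ihy => intro a; rw [mul_add, map_add, ihx a, ihy a, add_zero]
    | smul s x hx ih => intro a; rw [smul_eq_mul, ← mul_assoc]; exact ih (a * s)
  have := key p hp 1
  rwa [one_mul] at this


lemma XiXj_mem_pow (i j : Fin 4) (n a b : ℕ) (h : n ≤ a + b) :
    (X i : MvPolynomial (Fin 4) k) ^ a * X j ^ b ∈ (Ideal.span {X i, X j}) ^ n := by
  induction n generalizing a b with
  | zero => simp
  | succ n ih =>
    rw [pow_succ]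
    rcases Nat.eq_zero_or_pos a with rfl | ha
    · obtain ⟨b', rfl⟩ : ∃ b', b = b' + 1 := ⟨b - 1, by omega⟩
      have h0 : (X i : MvPolynomial (Fin 4) k) ^ 0 * X j ^ (b' + 1)
          = ((X i) ^ 0 * X j ^ b') * X j := by ring
      rw [h0]
      exact Ideal.mul_mem_mul (ih 0 b' (by omega)) (Ideal.subset_span (by simp))
    · obtain ⟨a', rfl⟩ : ∃ a', a = a' + 1 := ⟨a - 1, by omega⟩
      have h0 : (X i : MvPolynomial (Fin 4) k) ^ (a' + 1) * X j ^ b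
          = ((X i) ^ a' * X j ^ b) * X i := by ring
      rw [h0]
      exact Ideal.mul_mem_mul (ih a' b (by omega)) (Ideal.subset_span (by simp))

lemma mono_prod (v : Fin 4 →₀ ℕ) :
    (X 0 ^ (v 0) * X 1 ^ (v 1) * X 2 ^ (v 2) * X 3 ^ (v 3) : MvPolynomial (Fin 4) k)
      = monomial v 1 := by
  have hs : Finsupp.single 0 (v 0) + Finsupp.single 1 (v 1) + Finsupp.single 2 (v 2)
      + Finsupp.single 3 (v 3) = v := by
    ext i; fin_cases i <;> simp [Finsupp.single_apply]
  rw [X_pow_eq_monomial, X_pow_eq_monomial, X_pow_eq_monomial, X_pow_eq_monomial,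
    monomial_mul, monomial_mul, monomial_mul]
  simp only [mul_one]
  rw [hs]

lemma mono_mem_I_left {n1 : ℕ} {v : Fin 4 →₀ ℕ} (hv : n1 ≤ v 0 + v 1) :
    (monomial v (1 : k)) ∈ (Ideal.span {X 0, X 1} : Ideal (MvPolynomial (Fin 4) k)) ^ n1 := by
  rw [← mono_prod]
  have hm := XiXj_mem_pow (k := k) 0 1 n1 (v 0) (v 1) hv
  have h : (X 0 ^ (v 0) * X 1 ^ (v 1) * X 2 ^ (v 2) * X 3 ^ (v 3) : MvPolynomial (Fin 4) k)
      = (X 2 ^ (v 2) * X 3 ^ (v 3)) * (X 0 ^ (v 0) * X 1 ^ (v 1)) := by ring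
  rw [h]
  exact Ideal.mul_mem_left _ _ hm

lemma mono_mem_I_right {n2 : ℕ} {v : Fin 4 →₀ ℕ} (hv : n2 ≤ v 2 + v 3) :
    (monomial v (1 : k)) ∈ (Ideal.span {X 2, X 3} : Ideal (MvPolynomial (Fin 4) k)) ^ n2 := by
  rw [← mono_prod]
  have hm := XiXj_mem_pow (k := k) 2 3 n2 (v 2) (v 3) hv
  have h : (X 0 ^ (v 0) * X 1 ^ (v 1) * X 2 ^ (v 2) * X 3 ^ (v 3) : MvPolynomial (Fin 4) k)
      = (X 0 ^ (v 0) * X 1 ^ (v 1)) * (X 2 ^ (v 2) * X 3 ^ (v 3)) := by ring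
  rw [h]
  exact Ideal.mul_mem_left _ _ hm

noncomputable def bfam (n1 n2 : ℕ) (I : Ideal (MvPolynomial (Fin 4) k)) :
    Idx n1 n2 → MvPolynomial (Fin 4) k ⧸ I :=
  fun u => Ideal.Quotient.mk I (monomial (e u.val) 1)

lemma base_case {n1 n2 : ℕ} {I : Ideal (MvPolynomial (Fin 4) k)}
    (hI : I = (Ideal.span {X 0, X 1}) ^ n1 + (Ideal.span {X 2, X 3}) ^ n2
        + Ideal.span {X 0 * X 2 - X 1 * X 3})
    (v : Fin 4 →₀ ℕ) (hv : v 1 = 0 ∨ v 3 = 0) :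
    Ideal.Quotient.mk I (monomial v 1) ∈ Submodule.span k (Set.range (bfam n1 n2 I)) := by
  have hA : (Ideal.span {X 0, X 1} : Ideal (MvPolynomial (Fin 4) k)) ^ n1 ≤ I := by
    rw [hI, Submodule.add_eq_sup, Submodule.add_eq_sup]
    exact le_trans le_sup_left le_sup_left
  have hB : (Ideal.span {X 2, X 3} : Ideal (MvPolynomial (Fin 4) k)) ^ n2 ≤ I := by
    rw [hI, Submodule.add_eq_sup, Submodule.add_eq_sup]
    exact le_trans le_sup_right le_sup_left
  by_cases ha : n1 ≤ v 0 + v 1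
  · have h0 : Ideal.Quotient.mk I (monomial v 1) = 0 :=
      Ideal.Quotient.eq_zero_iff_mem.2 (hA (mono_mem_I_left ha))
    rw [h0]; exact zero_mem _
  by_cases hb : n2 ≤ v 2 + v 3
  · have h0 : Ideal.Quotient.mk I (monomial v 1) = 0 :=
      Ideal.Quotient.eq_zero_iff_mem.2 (hB (mono_mem_I_right hb))
    rw [h0]; exact zero_mem _
  · have hu : (v 0) + (v 1) < n1 ∧ (v 2) + (v 3) < n2 ∧ (v 1) * (v 3) = 0 :=
      ⟨by omega, by omega, by rcases hv with h | h <;> simp [h]⟩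
    have he : e (v 0, v 1, v 2, v 3) = v := by
      ext i; fin_cases i <;> simp [e, Finsupp.single_apply]
    refine Submodule.subset_span ⟨⟨(v 0, v 1, v 2, v 3), hu⟩, ?_⟩
    rw [bfam]
    simp only [he]

lemma mono_span {n1 n2 : ℕ} {I : Ideal (MvPolynomial (Fin 4) k)}
    (hI : I = (Ideal.span {X 0, X 1}) ^ n1 + (Ideal.span {X 2, X 3}) ^ n2
        + Ideal.span {X 0 * X 2 - X 1 * X 3}) :
    ∀ (N : ℕ) (v : Fin 4 →₀ ℕ), v 1 ≤ N →
      Ideal.Quotient.mk I (monomial v 1) ∈ Submodule.span k (Set.range (bfam n1 n2 I)) := by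
  have hC : Ideal.span {(X 0 : MvPolynomial (Fin 4) k) * X 2 - X 1 * X 3} ≤ I := by
    rw [hI, Submodule.add_eq_sup, Submodule.add_eq_sup]
    exact le_sup_right
  intro N
  induction N with
  | zero =>
    intro v hv
    exact base_case hI v (Or.inl (Nat.le_zero.mp hv))
  | succ N ih =>
    intro v hv
    by_cases hy : v 1 = 0
    · exact base_case hI v (Or.inl hy)
    by_cases hw : v 3 = 0
    · exact base_case hI v (Or.inr hw)
    set u : Fin 4 →₀ ℕ := Finsupp.single 0 (v 0) + Finsupp.single 1 (v 1 - 1)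
        + Finsupp.single 2 (v 2) + Finsupp.single 3 (v 3 - 1) with hu
    set v' : Fin 4 →₀ ℕ := Finsupp.single 0 (v 0 + 1) + Finsupp.single 1 (v 1 - 1)
        + Finsupp.single 2 (v 2 + 1) + Finsupp.single 3 (v 3 - 1) with hv'
    have h1 : u + Finsupp.single 0 1 + Finsupp.single 2 1 = v' := by
      ext i; fin_cases i <;> simp [hu, hv', Finsupp.single_apply] <;> omega
    have h2 : u + Finsupp.single 1 1 + Finsupp.single 3 1 = v := by
      ext i; fin_cases i <;> simp [hu, hv', Finsupp.single_apply] <;> omega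
    have hm1 : monomial u (1 : k) * (X 0 * X 2) = monomial v' 1 := by
      have hmm := monomial_XX (k := k) u 1 0 2 1 1
      simp only [pow_one] at hmm
      rw [hmm, h1]
    have hm2 : monomial u (1 : k) * (X 1 * X 3) = monomial v 1 := by
      have hmm := monomial_XX (k := k) u 1 1 3 1 1
      simp only [pow_one] at hmm
      rw [hmm, h2]
    have hrel : monomial v (1 : k) = monomial v' 1 - monomial u 1 * (X 0 * X 2 - X 1 * X 3) := by
      rw [mul_sub, hm1, hm2]; ring
    rw [hrel, map_sub]
    have hC0 : Ideal.Quotient.mk I (monomial u 1 * (X 0 * X 2 - X 1 * X 3)) = 0 :=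
      Ideal.Quotient.eq_zero_iff_mem.2
        (hC (Ideal.mul_mem_left _ _ (Ideal.subset_span (Set.mem_singleton _))))
    rw [hC0, sub_zero]
    refine ih v' ?_
    have : v' 1 = v 1 - 1 := by simp [hv', Finsupp.single_apply]
    omega


lemma L_e (n1 n2 : ℕ) (u : Idx n1 n2) :
    L n1 n2 (monomial (e u.val) (1 : k)) = Finsupp.single u 1 := by
  rw [L_monomial, one_smul, tgt]
  obtain ⟨⟨a, b, c, d⟩, hu⟩ := u
  obtain ⟨hu1, hu2, hu3⟩ := hu
  obtain ⟨e0, e1, e2, e3⟩ := e_apply (a, b, c, d)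
  rw [dif_pos (by rw [e0, e1, e2, e3]; exact ⟨hu1, hu2⟩)]
  congr 1
  apply Subtype.ext
  have hbd : b = 0 ∨ d = 0 := Nat.mul_eq_zero.mp hu3
  simp only [red, e0, e1, e2, e3, Prod.mk.injEq]
  refine ⟨by omega, by omega, by omega, by omega⟩

lemma lc_single {ι : Type*} (l : ι →₀ k) :
    Finsupp.linearCombination k (fun u : ι => Finsupp.single u (1 : k)) l = l := by
  conv_rhs => rw [← Finsupp.sum_single l]
  rw [Finsupp.linearCombination_apply, Finsupp.sum, Finsupp.sum]
  refine Finset.sum_congr rfl fun u _ => ?_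
  rw [Finsupp.smul_single, smul_eq_mul, mul_one]

end Stmt8Aux

open Stmt8Aux in
theorem stmt8 (k : Type*) [Field k] (n1 n2 : ℕ) (h1 : 2 ≤ n1) (h2 : 2 ≤ n2)
    (I : Ideal (MvPolynomial (Fin 4) k))
    (hI : I = (Ideal.span {X 0, X 1}) ^ n1 + (Ideal.span {X 2, X 3}) ^ n2
        + Ideal.span {X 0 * X 2 - X 1 * X 3}) :
    ∃ B : Module.Basis {u : ℕ × ℕ × ℕ × ℕ //
        u.1 + u.2.1 < n1 ∧ u.2.2.1 + u.2.2.2 < n2 ∧ u.2.1 * u.2.2.2 = 0}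
      k (MvPolynomial (Fin 4) k ⧸ I),
      ∀ u, B u = Ideal.Quotient.mk I
        (X 0 ^ u.1.1 * X 1 ^ u.1.2.1 * X 2 ^ u.1.2.2.1 * X 3 ^ u.1.2.2.2) := by
  -- the family
  have hbval : ∀ u : Idx n1 n2, bfam n1 n2 I u = Ideal.Quotient.mk I
      (X 0 ^ u.val.1 * X 1 ^ u.val.2.1 * X 2 ^ u.val.2.2.1 * X 3 ^ u.val.2.2.2) := by
    intro u
    rw [bfam]
    congr 1
    obtain ⟨⟨a, b, c, d⟩, hu⟩ := u
    obtain ⟨e0, e1, e2, e3⟩ := e_apply (a, b, c, d)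
    rw [← mono_prod, e0, e1, e2, e3]
  -- linear independence
  have lin : LinearIndependent k (bfam n1 n2 I) := by
    rw [linearIndependent_iff]
    intro l hl
    have hmk : Finsupp.linearCombination k (bfam n1 n2 I) l
        = (Ideal.Quotient.mkₐ k I).toLinearMap
          (Finsupp.linearCombination k
            (fun u : Idx n1 n2 => monomial (e u.val) (1 : k)) l) := by
      rw [Finsupp.apply_linearCombination]
      rfl
    rw [hmk] at hl
    have hmem : (Finsupp.linearCombination k
        (fun u : Idx n1 n2 => monomial (e u.val) (1 : k)) l) ∈ I := by
      rwa [AlgHom.toLinearMap_apply, Ideal.Quotient.mkₐ_eq_mk,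
        Ideal.Quotient.eq_zero_iff_mem] at hl
    have hL : L n1 n2 (Finsupp.linearCombination k
        (fun u : Idx n1 n2 => monomial (e u.val) (1 : k)) l) = 0 :=
      L_ideal n1 n2 (hI ▸ hmem)
    rw [Finsupp.apply_linearCombination] at hL
    have heq : ((L n1 n2 : MvPolynomial (Fin 4) k →ₗ[k] (Idx n1 n2 →₀ k)) ∘
        fun u : Idx n1 n2 => monomial (e u.val) (1 : k))
        = fun u : Idx n1 n2 => Finsupp.single u (1 : k) := by
      funext u
      exact L_e n1 n2 u
    rw [heq, lc_single] at hL
    exact hL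
  -- spanning
  have sp : ⊤ ≤ Submodule.span k (Set.range (bfam n1 n2 I)) := by
    have key : ∀ p : MvPolynomial (Fin 4) k,
        Ideal.Quotient.mk I p ∈ Submodule.span k (Set.range (bfam n1 n2 I)) := by
      intro p
      induction p using MvPolynomial.induction_on' with
      | add p q hp hq =>
        rw [RingHom.map_add]
        exact Submodule.add_mem _ hp hq
      | monomial v r =>
        have hr : (monomial v r : MvPolynomial (Fin 4) k) = r • monomial v 1 := by
          rw [MvPolynomial.smul_monomial, smul_eq_mul, mul_one]
        have hq : Ideal.Quotient.mk I (monomial v r)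
            = r • Ideal.Quotient.mk I (monomial v 1) := by
          rw [hr, ← Ideal.Quotient.mkₐ_eq_mk k I, map_smul]
        rw [hq]
        exact Submodule.smul_mem _ _ (mono_span hI (v 1) v le_rfl)
    intro x _
    obtain ⟨p, rfl⟩ := Ideal.Quotient.mk_surjective x
    exact key p
  exact ⟨Module.Basis.mk lin sp, fun u => by rw [Module.Basis.mk_apply, hbval u]⟩
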